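/- arXiv:2103.01276 — 3 statements merged into one kernel-verified Lean document; each statement's English description precedes it below -/
import Mathlib

section
/- Let $H$ be a finite class of unilabel predictors $h:\mathbb{R}^d\to[k]$, $S$ a finite training set, $\delta\geq 0$, $p\geq 1$, and define the robust loss $\ell_\delta(h;x,y,y') = \mathbb{1}[\exists z\in B_p(\delta): h(x+z)=y'] - \mathbb{1}[\forall z\in B_p(\delta): h(x+z)=y]$. Suppose for some $\gamma>0$ that for every probability distribution $D$ on $\breve S = \{(x_i,y'):i\in[m], y'\neq y_i\}$ there exists $h\in H$ with $\mathbb{E}_{(x_i,y')\sim D}[\ell_\delta(h;x_i,y_i,y')]\leq -\gamma$. Then there exists a probability distribution $Q$ over $H$ such that for all $(x_i,y_i)\in S$ and all $z\in B_p(\delta)$, we have $\Pr_{h\sim Q}[h(x_i+z)=y_i] > \Pr_{h\sim Q}[h(x_i+z)=y']$ for every $y'\neq y_i$; i.e., the weighted-plurality-vote classifier $h_Q^{\mathrm{am}}(x_i+z)=y_i$ for all perturbations $z\in B_p(\delta)$. -/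
open scoped Classical

lemma minimax_aux {ι R : Type} [Fintype ι] [Nonempty ι] [Fintype R] [Nonempty R]
    (v : ι → R → ℝ) (c : ℝ)
    (hyp : ∀ D : R → ℝ, (∀ r, 0 ≤ D r) → (∑ r, D r = 1) →
      ∃ j, ∑ r, D r * v j r ≤ c) :
    ∃ Q : ι → ℝ, (∀ j, 0 ≤ Q j) ∧ (∑ j, Q j = 1) ∧ ∀ r, ∑ j, Q j * v j r ≤ c := by
  by_contra hcon
  push_neg at hcon
  set E := EuclideanSpace ℝ R with hE
  set Φ : (ι → ℝ) → E := fun Q => (WithLp.toLp 2 (fun r => ∑ j, Q j * v j r) : E) with hΦ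
  set C : Set E := Φ '' stdSimplex ℝ ι with hC
  set K : Set E := {w : E | ∀ r, w r ≤ c} with hK
  have hΦcont : Continuous Φ := by
    apply (PiLp.continuous_toLp 2 _).comp
    apply continuous_pi
    intro r
    exact continuous_finset_sum _ fun j _ => (continuous_apply j).mul continuous_const
  have hΦlin : IsLinearMap ℝ Φ := by
    constructor
    · intro a b; ext r
      simp only [Φ]
      rw [show ((WithLp.toLp 2 (fun r => ∑ j, a j * v j r) : E) + (WithLp.toLp 2 (fun r => ∑ j, b j * v j r) : E)) r
          = (∑ j, a j * v j r) + (∑ j, b j * v j r) from rfl,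
        show (∑ j, (a + b) j * v j r) = ∑ j, (a j * v j r + b j * v j r) from
          Finset.sum_congr rfl fun j _ => by simp [Pi.add_apply]; ring,
        Finset.sum_add_distrib]
    · intro t a; ext r
      simp only [Φ]
      rw [show ((t • (WithLp.toLp 2 (fun r => ∑ j, a j * v j r) : E)) r) = t * ∑ j, a j * v j r from rfl,
        Finset.mul_sum]
      exact Finset.sum_congr rfl fun j _ => by simp [Pi.smul_apply, smul_eq_mul]; ring
  have hCcompact : IsCompact C := (isCompact_stdSimplex ℝ ι).image hΦcont
  have hCconv : Convex ℝ C := (convex_stdSimplex ℝ ι).is_linear_image hΦlin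
  have hKclosed : IsClosed K := by
    have : K = ⋂ r, {w : E | w r ≤ c} := by ext w; simp [hK, Set.mem_iInter]
    rw [this]
    exact isClosed_iInter fun r =>
      isClosed_le (EuclideanSpace.proj r).continuous continuous_const
  have hKconv : Convex ℝ K := by
    intro w hw w' hw' a b ha hb hab r
    have he : (a • w + b • w') r = a * w r + b * w' r := rfl
    rw [he]
    have h1 : w r ≤ c := hw r
    have h2 : w' r ≤ c := hw' r
    have h3 : a * c + b * c = c := by rw [← add_mul, hab, one_mul]
    have h4 : a * w r ≤ a * c := mul_le_mul_of_nonneg_left h1 ha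
    have h5 : b * w' r ≤ b * c := mul_le_mul_of_nonneg_left h2 hb
    linarith
  have hdisj : Disjoint C K := by
    rw [Set.disjoint_left]
    rintro w ⟨Q, hQ, rfl⟩ hwK
    obtain ⟨r, hr⟩ := hcon Q hQ.1 hQ.2
    exact absurd (hwK r) (not_le.2 hr)
  obtain ⟨f, u, s, hfu, hus, hfs⟩ :=
    geometric_hahn_banach_compact_closed hCconv hCcompact hKconv hKclosed hdisj
  have hdecomp : ∀ w : E, f w = ∑ r, w r * f (EuclideanSpace.single r (1:ℝ)) := by
    intro w
    have hw : w = ∑ r, w r • EuclideanSpace.single r (1:ℝ) := by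
      ext r
      rw [show ((∑ x : R, w x • EuclideanSpace.single x (1:ℝ)) r)
          = ∑ x : R, (w x • EuclideanSpace.single x (1:ℝ)) r by rw [WithLp.ofLp_sum, Finset.sum_apply]]
      simp [EuclideanSpace.single_apply]
    conv_lhs => rw [hw]
    rw [map_sum]
    exact Finset.sum_congr rfl fun r _ => by rw [map_smul]; simp [smul_eq_mul]
  set D : R → ℝ := fun r => -(f (EuclideanSpace.single r (1:ℝ))) with hD
  set c0 : E := (WithLp.toLp 2 (fun _ => c) : E) with hc0
  have hc0K : c0 ∈ K := fun r => le_refl c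
  have hfc0 : s < f c0 := hfs c0 hc0K
  have hDnn : ∀ r, 0 ≤ D r := by
    intro r
    by_contra hneg
    push_neg at hneg
    have hαpos : 0 < f (EuclideanSpace.single r (1:ℝ)) := by
      simp only [hD] at hneg; linarith
    set α := f (EuclideanSpace.single r (1:ℝ)) with hα
    set T : ℝ := max 0 ((f c0 - s) / α + 1) with hT
    have hT0 : 0 ≤ T := le_max_left _ _
    have hT1 : (f c0 - s) / α + 1 ≤ T := le_max_right _ _
    set wt : E := c0 - T • EuclideanSpace.single r (1:ℝ) with hwt
    have hwtK : wt ∈ K := by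
      intro r'
      have he : wt r' = c - T * (EuclideanSpace.single r (1:ℝ) r') := rfl
      rw [he, EuclideanSpace.single_apply]
      by_cases hrr : r' = r <;> simp [hrr] <;> nlinarith
    have h1 : s < f wt := hfs wt hwtK
    have h2 : f wt = f c0 - T * α := by
      rw [hwt, map_sub, map_smul, smul_eq_mul]
    have h3 : (f c0 - s) / α < T := by linarith
    have h4 : f c0 - s < T * α := by
      rw [div_lt_iff₀ hαpos] at h3; linarith
    rw [h2] at h1
    linarith
  have hsumD : ∀ w : R → ℝ,
      (∑ r, w r * f (EuclideanSpace.single r (1:ℝ))) = -(∑ r, w r * D r) := by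
    intro w
    rw [← Finset.sum_neg_distrib]
    exact Finset.sum_congr rfl fun r _ => by simp [hD]
  have hkey : ∀ j, c * (∑ r, D r) < ∑ r, v j r * D r := by
    intro j
    have hvC : (WithLp.toLp 2 (fun r => v j r) : E) ∈ C := by
      refine ⟨fun j' => if j' = j then 1 else 0, ⟨fun j' => by positivity, by simp⟩, ?_⟩
      ext r
      show (∑ j', (if j' = j then (1:ℝ) else 0) * v j' r) = v j r
      simp [Finset.sum_ite_eq']
    have h1 : f (WithLp.toLp 2 (fun r => v j r) : E) < f c0 := lt_trans (lt_trans (hfu _ hvC) hus) hfc0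
    rw [hdecomp, hdecomp] at h1
    have h2 := hsumD (fun r => v j r)
    have h3 := hsumD (fun _ => c)
    have hcD : (∑ r, (fun _ => c) r * D r) = c * ∑ r, D r := by
      rw [Finset.mul_sum]
    have h4 : (∑ r : R, (c0 : R → ℝ) r * f (EuclideanSpace.single r (1:ℝ)))
        = -(c * ∑ r, D r) := by
      rw [show (∑ r : R, (c0 : R → ℝ) r * f (EuclideanSpace.single r (1:ℝ)))
          = ∑ r : R, (fun _ => c) r * f (EuclideanSpace.single r (1:ℝ)) from rfl, h3, hcD]
    have h5 : (∑ r : R, ((WithLp.toLp 2 (fun r => v j r) : E) : R → ℝ) r * f (EuclideanSpace.single r (1:ℝ)))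
        = -(∑ r, v j r * D r) := h2
    rw [h4, h5] at h1
    linarith
  set S := ∑ r, D r with hS
  have hSnn : 0 ≤ S := Finset.sum_nonneg fun r _ => hDnn r
  have hSpos : 0 < S := by
    rcases hSnn.lt_or_eq with hlt | heq
    · exact hlt
    · exfalso
      obtain ⟨j⟩ := ‹Nonempty ι›
      have hk := hkey j
      have hzero : ∀ r, D r = 0 := fun r =>
        (Finset.sum_eq_zero_iff_of_nonneg (fun r _ => hDnn r)).1 heq.symm r (Finset.mem_univ r)
      simp only [hzero, mul_zero, Finset.sum_const_zero] at hk
      rw [← heq, mul_zero] at hk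
      exact lt_irrefl _ hk
  obtain ⟨j, hj⟩ := hyp (fun r => D r / S) (fun r => div_nonneg (hDnn r) hSnn)
    (by rw [← Finset.sum_div, ← hS, div_self (ne_of_gt hSpos)])
  have hEq : ∑ r, D r / S * v j r = (∑ r, v j r * D r) / S := by
    rw [Finset.sum_div]; exact Finset.sum_congr rfl fun r _ => by ring
  rw [hEq, div_le_iff₀ hSpos] at hj
  have := hkey j
  nlinarith

/-- The ℓ_p ball of radius δ in ℝ^d. -/
def Bp (d : ℕ) (p δ : ℝ) : Set (Fin d → ℝ) := {z | (∑ i, |z i| ^ p) ^ (1 / p) ≤ δ}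

/-- robust multiclass boosting. `h j : ℝ^d → [k]` are unilabel predictors. -/
theorem robust_boosting
    (d k m : ℕ) (hk : 2 ≤ k) (hm : 1 ≤ m)
    (p δ : ℝ) (hp : 1 ≤ p) (hδ : 0 ≤ δ)
    (ι : Type) [Fintype ι] [Nonempty ι]
    (h : ι → (Fin d → ℝ) → Fin k)
    (x : Fin m → Fin d → ℝ) (ylab : Fin m → Fin k)
    (γ : ℝ) (hγ : 0 < γ)
    -- (γ, δ)-robust weak learning: for every distribution D on S̆ there is h ∈ H with errδ(h, D) ≤ -γ
    (hweak : ∀ D : Fin m → Fin k → ℝ,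
      (∀ i y', 0 ≤ D i y') → (∀ i, D i (ylab i) = 0) → (∑ i, ∑ y', D i y' = 1) →
      ∃ j : ι,
        (∑ i, ∑ y', D i y' *
          ((if (∃ z ∈ Bp d p δ, h j (x i + z) = y') then (1:ℝ) else 0)
            - (if (∀ z ∈ Bp d p δ, h j (x i + z) = ylab i) then (1:ℝ) else 0)))
          ≤ -γ) :
    -- conclusion: a distribution Q over H whose weighted-plurality vote is robustly correct on S
    ∃ Q : ι → ℝ, (∀ j, 0 ≤ Q j) ∧ (∑ j, Q j = 1) ∧
      ∀ i : Fin m, ∀ z ∈ Bp d p δ, ∀ y' : Fin k, y' ≠ ylab i →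
        (∑ j, Q j * (if h j (x i + z) = y' then (1:ℝ) else 0)) <
        (∑ j, Q j * (if h j (x i + z) = ylab i then (1:ℝ) else 0)) := by
  classical
  haveI : Nonempty (Fin m × Fin k) := ⟨(⟨0, by omega⟩, ⟨0, by omega⟩)⟩
  set ℓf : ι → Fin m → Fin k → ℝ := fun j i y' =>
    (if (∃ z ∈ Bp d p δ, h j (x i + z) = y') then (1:ℝ) else 0)
      - (if (∀ z ∈ Bp d p δ, h j (x i + z) = ylab i) then (1:ℝ) else 0) with hℓ
  set v : ι → (Fin m × Fin k) → ℝ :=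
    fun j r => if r.2 = ylab r.1 then -γ else ℓf j r.1 r.2 with hv
  have hyp : ∀ D : (Fin m × Fin k) → ℝ, (∀ r, 0 ≤ D r) → (∑ r, D r = 1) →
      ∃ j, ∑ r, D r * v j r ≤ -γ := by
    intro D hDnn hDsum
    set t := ∑ i, ∑ y', (if y' = ylab i then 0 else D (i, y')) with ht
    have htnn : 0 ≤ t :=
      Finset.sum_nonneg fun i _ => Finset.sum_nonneg fun y _ => by
        split_ifs
        exacts [le_refl 0, hDnn _]
    have htot : t + (∑ i, ∑ y', (if y' = ylab i then D (i, y') else 0)) = 1 := by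
      rw [ht, ← hDsum, Fintype.sum_prod_type, ← Finset.sum_add_distrib]
      refine Finset.sum_congr rfl fun i _ => ?_
      rw [← Finset.sum_add_distrib]
      refine Finset.sum_congr rfl fun y _ => ?_
      split_ifs <;> ring
    have hdiag : (∑ i, ∑ y', (if y' = ylab i then D (i, y') else 0)) = 1 - t := by
      linarith
    have hsplit : ∀ j, (∑ r : Fin m × Fin k, D r * v j r)
        = (∑ i, ∑ y', (if y' = ylab i then 0 else D (i, y') * ℓf j i y'))
          + (-γ) * (1 - t) := by
      intro j
      have hmul : (-γ) * (∑ i, ∑ y', (if y' = ylab i then D (i, y') else 0))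
          = ∑ i, ∑ y', (if y' = ylab i then -γ * D (i, y') else 0) := by
        rw [Finset.mul_sum]
        refine Finset.sum_congr rfl fun i _ => ?_
        rw [Finset.mul_sum]
        refine Finset.sum_congr rfl fun y _ => ?_
        split_ifs <;> ring
      rw [← hdiag, hmul, Fintype.sum_prod_type, ← Finset.sum_add_distrib]
      refine Finset.sum_congr rfl fun i _ => ?_
      rw [← Finset.sum_add_distrib]
      refine Finset.sum_congr rfl fun y _ => ?_
      simp only [hv]
      rcases eq_or_ne y (ylab i) with hc | hc
      · rw [if_pos hc, if_pos hc, if_pos hc]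
        ring
      · rw [if_neg hc, if_neg hc, if_neg hc]
        ring
    rcases eq_or_lt_of_le htnn with ht0 | htpos
    · obtain ⟨j⟩ := ‹Nonempty ι›
      refine ⟨j, ?_⟩
      have hDoff : ∀ i y, y ≠ ylab i → D (i, y) = 0 := by
        intro i y hc
        have h1 : ∀ i ∈ Finset.univ, (0:ℝ) ≤ ∑ y', (if y' = ylab i then 0 else D (i, y')) :=
          fun i _ => Finset.sum_nonneg fun y _ => by
            split_ifs
            exacts [le_refl 0, hDnn _]
        have h2 := (Finset.sum_eq_zero_iff_of_nonneg h1).1 ht0.symm i (Finset.mem_univ i)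
        have h3 := (Finset.sum_eq_zero_iff_of_nonneg (fun y _ => by
          split_ifs
          exacts [le_refl 0, hDnn _])).1 h2 y (Finset.mem_univ y)
        rwa [if_neg hc] at h3
      rw [hsplit j]
      rw [Finset.sum_eq_zero fun i _ => Finset.sum_eq_zero fun y _ => by
        rcases eq_or_ne y (ylab i) with hc | hc
        · rw [if_pos hc]
        · rw [if_neg hc, hDoff i y hc, zero_mul]]
      rw [← ht0]
      nlinarith
    · set D2 : Fin m → Fin k → ℝ := fun i y => if y = ylab i then 0 else D (i, y) / t
        with hD2
      have htne : t ≠ 0 := htpos.ne'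
      have hD2nn : ∀ i y, 0 ≤ D2 i y := by
        intro i y
        simp only [hD2]
        split_ifs
        exacts [le_refl 0, div_nonneg (hDnn _) htnn]
      have hD2z : ∀ i, D2 i (ylab i) = 0 := fun i => by simp [hD2]
      have hD2sum : ∑ i, ∑ y', D2 i y' = 1 := by
        have he : ∀ i y, D2 i y = (if y = ylab i then 0 else D (i, y)) / t := by
          intro i y
          simp only [hD2]
          split_ifs <;> simp
        calc ∑ i, ∑ y', D2 i y'
            = ∑ i, ∑ y', (if y' = ylab i then 0 else D (i, y')) / t :=
              Finset.sum_congr rfl fun i _ => Finset.sum_congr rfl fun y _ => he i y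
          _ = t / t := by rw [ht, Finset.sum_div]
                          exact Finset.sum_congr rfl fun i _ => (Finset.sum_div _ _ _).symm
          _ = 1 := div_self htne
      obtain ⟨j, hj⟩ := hweak D2 hD2nn hD2z hD2sum
      have hj' : ∑ i, ∑ y', D2 i y' * ℓf j i y' ≤ -γ := hj
      refine ⟨j, ?_⟩
      rw [hsplit j]
      have hoff : (∑ i, ∑ y', (if y' = ylab i then 0 else D (i, y') * ℓf j i y'))
          = t * (∑ i, ∑ y', D2 i y' * ℓf j i y') := by
        rw [Finset.mul_sum]
        refine Finset.sum_congr rfl fun i _ => ?_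
        rw [Finset.mul_sum]
        refine Finset.sum_congr rfl fun y _ => ?_
        simp only [hD2]
        rcases eq_or_ne y (ylab i) with hc | hc
        · rw [if_pos hc, if_pos hc]
          ring
        · rw [if_neg hc, if_neg hc]
          field_simp
      rw [hoff]
      nlinarith [mul_le_mul_of_nonneg_left hj' htnn]
  obtain ⟨Q, hQ1, hQ2, hQ3⟩ := minimax_aux v (-γ) hyp
  refine ⟨Q, hQ1, hQ2, ?_⟩
  intro i z hz y' hy'
  have hQr := hQ3 (i, y')
  have hvr : ∀ j, v j (i, y') = ℓf j i y' := by
    intro j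
    simp only [hv]
    rw [if_neg hy']
  have hQr' : ∑ j, Q j * ℓf j i y' ≤ -γ := by
    calc ∑ j, Q j * ℓf j i y' = ∑ j, Q j * v j (i, y') :=
          Finset.sum_congr rfl fun j _ => by rw [hvr j]
      _ ≤ -γ := hQr
  have hdiff : (∑ j, Q j * (if h j (x i + z) = y' then (1:ℝ) else 0))
      - (∑ j, Q j * (if h j (x i + z) = ylab i then (1:ℝ) else 0))
      ≤ ∑ j, Q j * ℓf j i y' := by
    rw [← Finset.sum_sub_distrib]
    refine Finset.sum_le_sum fun j _ => ?_
    have hA : (if h j (x i + z) = y' then (1:ℝ) else 0)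
        ≤ (if (∃ z ∈ Bp d p δ, h j (x i + z) = y') then (1:ℝ) else 0) := by
      split_ifs with h1 h2
      · exact le_refl 1
      · exact absurd ⟨z, hz, h1⟩ h2
      · exact zero_le_one
      · exact le_refl 0
    have hB : (if (∀ z ∈ Bp d p δ, h j (x i + z) = ylab i) then (1:ℝ) else 0)
        ≤ (if h j (x i + z) = ylab i then (1:ℝ) else 0) := by
      split_ifs with h1 h2
      · exact le_refl 1
      · exact absurd (h1 z hz) h2
      · exact zero_le_one
      · exact le_refl 0
    have hℓj : ℓf j i y' = (if (∃ z ∈ Bp d p δ, h j (x i + z) = y') then (1:ℝ) else 0)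
        - (if (∀ z ∈ Bp d p δ, h j (x i + z) = ylab i) then (1:ℝ) else 0) := rfl
    rw [hℓj, mul_sub]
    have h4 := mul_le_mul_of_nonneg_left hA (hQ1 j)
    have h5 := mul_le_mul_of_nonneg_left hB (hQ1 j)
    linarith
  linarith
end

section
/- Let $H$ be a finite class of predictors with radius guarantees: each $h\in H$ is a pair $(h_L,h_R)$ with $h_L:\mathbb{R}^d\to[k]$ and $h_R:\mathbb{R}^d\to\mathbb{R}_{\geq 0}$ satisfying the soundness property that for all $x$ and all $z$ with $\|z\|_2\leq h_R(x)$, $h_L(x+z)=h_L(x)$. Define certified accuracy $\mathrm{acc}_\delta(h,D)=\Pr_{(x,y)\sim D}[h_L(x)=y \wedge h_R(x)\geq\delta]$. Suppose $\delta^*\geq 0$ and $\gamma>0$ are such that for every distribution $D$ over the finite training set $S$ there exists $h\in H$ with $\mathrm{acc}_{\delta^*}(h,D)\geq\frac12+\frac{\gamma}{2}$. Then there exists a probability distribution $Q$ over $H$ such that for all $(x,y)\in S$ and all $z$ with $\|z\|_2\leq\delta^*$, $\Pr_{h\sim Q}[h_L(x+z)=y]\geq\frac{1+\gamma}{2}$;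 in particular the plurality-vote classifier over $(h_L)_{h\sim Q}$ predicts $y$ on every such perturbed input. -/
open scoped Classical

lemma minimax_key {ι : Type} [Fintype ι] [Nonempty ι] {m : ℕ}
    (A : ι → Fin m → ℝ) (c : ℝ)
    (hweak : ∀ D : Fin m → ℝ, (∀ i, 0 ≤ D i) → (∑ i, D i = 1) →
      ∃ j : ι, c ≤ ∑ i, D i * A j i) :
    ∃ Q : ι → ℝ, (∀ j, 0 ≤ Q j) ∧ (∑ j, Q j = 1) ∧ ∀ i, c ≤ ∑ j, Q j * A j i := by
  classical
  let T : (ι → ℝ) →ₗ[ℝ] (Fin m → ℝ) :=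
    { toFun := fun Q i => ∑ j, Q j * A j i
      map_add' := by
        intro Q R; funext i; simp [add_mul, Finset.sum_add_distrib]
      map_smul' := by
        intro r Q; funext i; simp [Finset.mul_sum, mul_assoc] }
  have hTcont : Continuous T := T.continuous_of_finiteDimensional
  set C : Set (Fin m → ℝ) := T '' stdSimplex ℝ ι with hC
  set K : Set (Fin m → ℝ) := {v | ∀ i, c ≤ v i} with hKdef
  have hCcomp : IsCompact C := (isCompact_stdSimplex ℝ ι).image hTcont
  have hCconv : Convex ℝ C := (convex_stdSimplex ℝ ι).linear_image T
  have hKinter : K = ⋂ i, {v : Fin m → ℝ | c ≤ v i} := by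
    ext v; simp [hKdef, Set.mem_iInter]
  have hKclosed : IsClosed K := by
    rw [hKinter]
    exact isClosed_iInter fun i => isClosed_le continuous_const (continuous_apply i)
  have hKconv : Convex ℝ K := by
    rw [hKinter]
    exact convex_iInter fun i =>
      convex_halfSpace_ge (IsLinearMap.mk (fun a b => rfl) (fun r a => rfl) :
        IsLinearMap ℝ (fun v : Fin m → ℝ => v i)) c
  have hmeet : ∃ Q ∈ stdSimplex ℝ ι, T Q ∈ K := by
    by_contra hcon
    push_neg at hcon
    have hdisj : Disjoint K C := by
      rw [Set.disjoint_right]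
      rintro v ⟨Q, hQ, rfl⟩
      exact hcon Q hQ
    obtain ⟨f, u, v, hKu, huv, hCv⟩ :=
      geometric_hahn_banach_closed_compact hKconv hKclosed hCconv hCcomp hdisj
    set w : Fin m → ℝ := fun i => -f (Pi.single i 1) with hw
    have hf_eq : ∀ p : Fin m → ℝ, f p = -∑ i, p i * w i := by
      intro p
      have hp : p = ∑ i, p i • (Pi.single i 1 : Fin m → ℝ) := by
        funext j
        simp [Finset.sum_apply, Pi.single_apply, Finset.sum_ite_eq']
      calc f p = f (∑ i, p i • (Pi.single i 1 : Fin m → ℝ)) := by rw [← hp]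
        _ = ∑ i, p i • f (Pi.single i (1:ℝ)) := by rw [map_sum]; simp
        _ = -∑ i, p i * w i := by
            rw [← Finset.sum_neg_distrib]
            refine Finset.sum_congr rfl fun i _ => ?_
            simp only [hw, smul_eq_mul]; ring
    have hcK : (fun _ : Fin m => c) ∈ K := fun i => le_refl c
    have hcKu : f (fun _ => c) < u := hKu _ hcK
    -- each coordinate of w is nonnegative
    have hwnn : ∀ i, 0 ≤ w i := by
      intro i
      by_contra hneg
      push_neg at hneg
      have hposden : 0 < -w i := by linarith
      have hxnn : 0 ≤ (u - f (fun _ => c)) / (-w i) :=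
        div_nonneg (by linarith) hposden.le
      set t : ℝ := (u - f (fun _ => c)) / (-w i) + 1 with ht
      have htpos : 0 < t := by rw [ht]; linarith
      have hmem : ((fun _ : Fin m => c) + t • (Pi.single i 1 : Fin m → ℝ)) ∈ K := by
        intro j
        have h0 : 0 ≤ t * (Pi.single i 1 : Fin m → ℝ) j := by
          apply mul_nonneg htpos.le
          by_cases h : j = i <;> simp [Pi.single_apply, h]
        have : ((fun _ : Fin m => c) + t • (Pi.single i 1 : Fin m → ℝ)) j
            = c + t * (Pi.single i 1 : Fin m → ℝ) j := by simp
        rw [this]; linarith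
      have hval : f ((fun _ : Fin m => c) + t • (Pi.single i 1 : Fin m → ℝ))
          = f (fun _ => c) + t * (-w i) := by
        rw [map_add, map_smul]
        simp only [hw, smul_eq_mul]
        ring
      have hbig : u < f ((fun _ : Fin m => c) + t • (Pi.single i 1 : Fin m → ℝ)) := by
        rw [hval]
        have h1 : (u - f (fun _ => c)) / (-w i) * (-w i) = u - f (fun _ => c) :=
          div_mul_cancel₀ _ hposden.ne'
        have : t * (-w i) = (u - f (fun _ => c)) + (-w i) := by
          rw [ht, add_mul, h1, one_mul]
        rw [this]; linarith
      exact absurd (hKu _ hmem) (not_lt.mpr hbig.le)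
    set W : ℝ := ∑ i, w i with hW
    have hWnn : 0 ≤ W := Finset.sum_nonneg fun i _ => hwnn i
    -- C is nonempty
    obtain ⟨j₀⟩ := ‹Nonempty ι›
    have hj₀ : T (Pi.single j₀ 1) ∈ C := ⟨_, single_mem_stdSimplex ℝ j₀, rfl⟩
    have hWpos : 0 < W := by
      rcases hWnn.lt_or_eq with h | h
      · exact h
      · exfalso
        have hz : ∀ i, w i = 0 := by
          intro i
          have h2 := (Finset.sum_eq_zero_iff_of_nonneg
            (s := Finset.univ) (f := w) (fun i _ => hwnn i)).mp h.symm
          exact h2 i (Finset.mem_univ i)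
        have hf0 : ∀ p, f p = 0 := by
          intro p; rw [hf_eq]; simp [hz]
        have h1 : (0:ℝ) < u := by have := hcKu; rwa [hf0] at this
        have h2 : v < 0 := by have := hCv _ hj₀; rwa [hf0] at this
        linarith
    -- build the distribution D
    set D : Fin m → ℝ := fun i => w i / W with hD
    have hDnn : ∀ i, 0 ≤ D i := fun i => div_nonneg (hwnn i) hWpos.le
    have hDsum : ∑ i, D i = 1 := by
      rw [hD]; rw [← Finset.sum_div]; exact div_self hWpos.ne'
    obtain ⟨j, hj⟩ := hweak D hDnn hDsum
    -- but the separation gives ∑ D i * A j i < c for every j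
    have hTj : T (Pi.single j 1) ∈ C := ⟨_, single_mem_stdSimplex ℝ j, rfl⟩
    have hTj_eq : T (Pi.single j 1) = A j := by
      funext i
      have hTi : T (Pi.single j 1) i = ∑ j', (Pi.single j 1 : ι → ℝ) j' * A j' i := rfl
      rw [hTi, Finset.sum_eq_single j]
      · simp
      · intro b _ hb; simp [Pi.single_apply, hb]
      · intro hb; exact absurd (Finset.mem_univ j) hb
    have h1 : v < -∑ i, A j i * w i := by
      have := hCv _ hTj
      rwa [hTj_eq, hf_eq] at this
    have h2 : f (fun _ => c) = -(c * W) := by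
      rw [hf_eq, hW, Finset.mul_sum]
    have h3 : -(c * W) < v := by rw [← h2]; exact hcKu.trans huv
    have h4 : ∑ i, A j i * w i < c * W := by
      have := h1.trans' h3  -- -(c*W) < v < -∑ ...
      linarith
    have h5 : ∑ i, D i * A j i < c := by
      have : ∑ i, D i * A j i = (∑ i, A j i * w i) / W := by
        rw [Finset.sum_div]
        refine Finset.sum_congr rfl fun i _ => ?_
        rw [hD]; ring
      rw [this]
      rw [div_lt_iff₀ hWpos]
      linarith [h4]
    linarith
  obtain ⟨Q, hQ, hTQ⟩ := hmeet
  exact ⟨Q, fun j => hQ.1 j, hQ.2, fun i => hTQ i⟩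


/-- boosting with certified (radius-guarantee) predictors. `ι` indexes the
finite class `H` of predictors `(hL j, hR j)` with sound ℓ₂-radius guarantees. -/
theorem certified_boosting
    (d k m : ℕ) (hm : 1 ≤ m)
    (ι : Type) [Fintype ι] [Nonempty ι]
    (hL : ι → EuclideanSpace ℝ (Fin d) → Fin k)
    (hR : ι → EuclideanSpace ℝ (Fin d) → ℝ)
    (hRnn : ∀ j x, 0 ≤ hR j x)
    -- soundness of the radius guarantee
    (hsound : ∀ j : ι, ∀ x z : EuclideanSpace ℝ (Fin d), ‖z‖ ≤ hR j x → hL j (x + z) = hL j x)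
    (x : Fin m → EuclideanSpace ℝ (Fin d)) (ylab : Fin m → Fin k)
    (δstar γ : ℝ) (hδ : 0 ≤ δstar) (hγ : 0 < γ)
    -- weak learning in certified accuracy: for every D over S some h has acc_{δ*}(h, D) ≥ 1/2 + γ/2
    (hweak : ∀ D : Fin m → ℝ, (∀ i, 0 ≤ D i) → (∑ i, D i = 1) →
      ∃ j : ι, (1 / 2 + γ / 2 : ℝ) ≤
        ∑ i, D i * (if hL j (x i) = ylab i ∧ δstar ≤ hR j (x i) then (1:ℝ) else 0)) :
    ∃ Q : ι → ℝ, (∀ j, 0 ≤ Q j) ∧ (∑ j, Q j = 1) ∧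
      ∀ i : Fin m, ∀ z : EuclideanSpace ℝ (Fin d), ‖z‖ ≤ δstar →
        ((1 + γ) / 2 ≤ ∑ j, Q j * (if hL j (x i + z) = ylab i then (1:ℝ) else 0)) ∧
        (∀ y' : Fin k, y' ≠ ylab i →
          (∑ j, Q j * (if hL j (x i + z) = y' then (1:ℝ) else 0)) <
          (∑ j, Q j * (if hL j (x i + z) = ylab i then (1:ℝ) else 0))) := by
  classical
  set A : ι → Fin m → ℝ :=
    fun j i => if hL j (x i) = ylab i ∧ δstar ≤ hR j (x i) then (1:ℝ) else 0 with hA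
  obtain ⟨Q, hQnn, hQsum, hQgood⟩ :=
    minimax_key A (1 / 2 + γ / 2) (fun D hD1 hD2 => hweak D hD1 hD2)
  refine ⟨Q, hQnn, hQsum, fun i z hz => ?_⟩
  -- robust correctness lower bound
  have hterm : ∀ j, A j i ≤ (if hL j (x i + z) = ylab i then (1:ℝ) else 0) := by
    intro j
    by_cases h : hL j (x i) = ylab i ∧ δstar ≤ hR j (x i)
    · have hcorrect : hL j (x i + z) = ylab i := by
        rw [hsound j (x i) z (hz.trans h.2)]; exact h.1
      simp [hA, h, hcorrect]
    · simp only [hA, if_neg h]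
      by_cases h2 : hL j (x i + z) = ylab i <;> simp [h2]
  have hp : (1 + γ) / 2 ≤ ∑ j, Q j * (if hL j (x i + z) = ylab i then (1:ℝ) else 0) := by
    have h1 : ∑ j, Q j * A j i ≤
        ∑ j, Q j * (if hL j (x i + z) = ylab i then (1:ℝ) else 0) :=
      Finset.sum_le_sum fun j _ => mul_le_mul_of_nonneg_left (hterm j) (hQnn j)
    have h2 := hQgood i
    have : (1 + γ) / 2 = 1 / 2 + γ / 2 := by ring
    rw [this]
    exact h2.trans h1
  refine ⟨hp, fun y' hy' => ?_⟩
  set p : ℝ := ∑ j, Q j * (if hL j (x i + z) = ylab i then (1:ℝ) else 0) with hpdef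
  have hup : ∑ j, Q j * (if hL j (x i + z) = y' then (1:ℝ) else 0) ≤ 1 - p := by
    have h1 : ∀ j, Q j * (if hL j (x i + z) = y' then (1:ℝ) else 0)
        ≤ Q j * (1 - (if hL j (x i + z) = ylab i then (1:ℝ) else 0)) := by
      intro j
      apply mul_le_mul_of_nonneg_left _ (hQnn j)
      by_cases h : hL j (x i + z) = y'
      · have : hL j (x i + z) ≠ ylab i := by rw [h]; exact hy'
        simp [h, this, hy']
      · by_cases h2 : hL j (x i + z) = ylab i <;> simp [h, h2, Ne.symm hy']
    calc ∑ j, Q j * (if hL j (x i + z) = y' then (1:ℝ) else 0)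
        ≤ ∑ j, Q j * (1 - (if hL j (x i + z) = ylab i then (1:ℝ) else 0)) :=
          Finset.sum_le_sum fun j _ => h1 j
      _ = 1 - p := by
          simp only [mul_sub, mul_one, Finset.sum_sub_distrib, hQsum, hpdef]
  have : 1 - p < p := by
    have : (1 + γ) / 2 ≤ p := hp
    linarith
  linarith
end

section
/- (Ensemble radius certificate.) Let $h_1,\dots,h_N:\mathbb{R}^d\to[k]$ be unilabel predictors with nonnegative weights $q_1,\dots,q_N$ summing to 1, and suppose each $h_i$ comes with a radius $r_i\geq 0$ at a point $x$ such that $h_i(x+z)=h_i(x)$ for all $\|z\|_2\leq r_i$. Order them so that $r_1\leq r_2\leq\cdots\leq r_N$. Let $y$ denote the plurality vote at $x$ and, for an index $i^*$, define $g^{(i^*)}(x)_c = \sum_{j\geq i^*} q_j\,\mathbb{1}[h_j(x)=c]$. If $\sum_{i<i^*} q_i + \max_{y'\neq y} g^{(i^*)}(x)_{y'} \leq g^{(i^*)}(x)_y$ with the inequality strict, then for every $z$ with $\|z\|_2\leq r_{i^*}$, the weighted plurality vote of $h_1,\dots,h_N$ at $x+z$ is still $y$ (strictly): $\sum_j q_j\,\mathbb{1}[h_j(x+z)=y]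 > \sum_j q_j\,\mathbb{1}[h_j(x+z)=y']$ for every $y'\neq y$. -/
open scoped Classical

/-- ensemble radius certificate. If the high-radius tail of the ensemble
already outvotes every other label by more than the total weight of the low-radius head,
then the weighted plurality vote is stable under all perturbations of ℓ₂ norm ≤ r_{i*}. -/
theorem ensemble_radius_certificate
    (d k N : ℕ)
    (h : Fin N → EuclideanSpace ℝ (Fin d) → Fin k)
    (q : Fin N → ℝ) (hq0 : ∀ j, 0 ≤ q j) (hq1 : ∑ j, q j = 1)
    (r : Fin N → ℝ) (hr0 : ∀ j, 0 ≤ r j)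
    (hmono : ∀ j j' : Fin N, j ≤ j' → r j ≤ r j')   -- r₁ ≤ r₂ ≤ ⋯ ≤ r_N
    (x : EuclideanSpace ℝ (Fin d))
    (hrad : ∀ j : Fin N, ∀ z : EuclideanSpace ℝ (Fin d), ‖z‖ ≤ r j → h j (x + z) = h j x)
    (y : Fin k) (istar : Fin N)
    -- certificate inequality (strict)
    (hcert : ∀ y' : Fin k, y' ≠ y →
      (∑ j ∈ Finset.univ.filter (fun j => j < istar), q j)
        + (∑ j ∈ Finset.univ.filter (fun j => istar ≤ j), q j * (if h j x = y' then (1:ℝ) else 0))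
      < ∑ j ∈ Finset.univ.filter (fun j => istar ≤ j), q j * (if h j x = y then (1:ℝ) else 0)) :
    ∀ z : EuclideanSpace ℝ (Fin d), ‖z‖ ≤ r istar →
      ∀ y' : Fin k, y' ≠ y →
        (∑ j, q j * (if h j (x + z) = y' then (1:ℝ) else 0)) <
        (∑ j, q j * (if h j (x + z) = y then (1:ℝ) else 0)) := by
  intro z hz y' hy'
  have hfix : ∀ j ∈ Finset.univ.filter (fun j => istar ≤ j), h j (x + z) = h j x := by
    intro j hj
    simp only [Finset.mem_filter] at hj
    exact hrad j z (hz.trans (hmono istar j hj.2))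
  have hsplit : ∀ c : Fin k,
      (∑ j, q j * (if h j (x + z) = c then (1:ℝ) else 0)) =
      (∑ j ∈ Finset.univ.filter (fun j => ¬ istar ≤ j), q j * (if h j (x + z) = c then (1:ℝ) else 0))
      + (∑ j ∈ Finset.univ.filter (fun j => istar ≤ j), q j * (if h j x = c then (1:ℝ) else 0)) := by
    intro c
    rw [← Finset.sum_filter_add_sum_filter_not Finset.univ (fun j => istar ≤ j)]
    rw [Finset.sum_congr rfl (fun j hj => by rw [hfix j hj]), add_comm]
  rw [hsplit y', hsplit y]
  have hhead_le : (∑ j ∈ Finset.univ.filter (fun j => ¬ istar ≤ j), q j * (if h j (x + z) = y' then (1:ℝ) else 0))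
      ≤ ∑ j ∈ Finset.univ.filter (fun j => j < istar), q j := by
    have : Finset.univ.filter (fun j : Fin N => ¬ istar ≤ j) = Finset.univ.filter (fun j => j < istar) := by
      simp [not_le]
    rw [this]
    apply Finset.sum_le_sum
    intro j _
    by_cases hc : h j (x + z) = y' <;> simp [hc, hq0 j]
  have hhead_nonneg : (0:ℝ) ≤ ∑ j ∈ Finset.univ.filter (fun j => ¬ istar ≤ j), q j * (if h j (x + z) = y then (1:ℝ) else 0) := by
    apply Finset.sum_nonneg
    intro j _
    by_cases hc : h j (x + z) = y <;> simp [hc, hq0 j]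
  have := hcert y' hy'
  linarith
end
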